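/- For n ≠ 0 and y > 0, the function h(τ) = Γ(1-k, -4πny) e^{2πinτ} (with τ = x+iy) satisfies Δ_k h = 0, where Γ(s,x) = ∫_x^∞ t^{s-1} e^{-t} dt is the incomplete gamma function (here with n < 0 so that -4πny > 0). -/

import Mathlib

open Complex Real

/-- Partial derivative in the `x`-direction of `f : ℂ → ℂ` at `τ`. -/
noncomputable def pdx (f : ℂ → ℂ) (τ : ℂ) : ℂ := fderiv ℝ f τ 1

/-- Partial derivative in the `y`-direction of `f : ℂ → ℂ` at `τ`. -/
noncomputable def pdy (f : ℂ → ℂ) (τ : ℂ) : ℂ := fderiv ℝ f τ Complex.I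

/-- The weight `k` hyperbolic Laplacian
`Δ_k = -y²(∂²/∂x² + ∂²/∂y²) + iky(∂/∂x + i ∂/∂y)`. -/
noncomputable def hypLap (k : ℝ) (f : ℂ → ℂ) (τ : ℂ) : ℂ :=
  -(τ.im : ℂ) ^ 2 * (pdx (pdx f) τ + pdy (pdy f) τ) +
    Complex.I * (k : ℂ) * (τ.im : ℂ) * (pdx f τ + Complex.I * pdy f τ)

/-- The conjugate-linear operator `ξ_k(h) = 2i y^k conj(∂h/∂τ̄)`, where
`∂/∂τ̄ = (1/2)(∂/∂x + i ∂/∂y)`. -/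
noncomputable def xiOp (k : ℝ) (f : ℂ → ℂ) (τ : ℂ) : ℂ :=
  2 * Complex.I * ((τ.im ^ k : ℝ) : ℂ) * (starRingEnd ℂ) ((pdx f τ + Complex.I * pdy f τ) / 2)

/-- The open upper half-plane as a subset of `ℂ`. -/
def UHP : Set ℂ := {τ : ℂ | 0 < τ.im}

/-- The upper incomplete gamma function `Γ(s,x) = ∫_x^∞ t^{s-1} e^{-t} dt`. -/
noncomputable def uGamma (s x : ℝ) : ℝ := ∫ t in Set.Ioi x, t ^ (s - 1) * Real.exp (-t)

section AuxHypLap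
open MeasureTheory Set

lemma uG_cont (s : ℝ) {t : ℝ} (ht : 0 < t) :
    ContinuousAt (fun t : ℝ => t ^ (s - 1) * Real.exp (-t)) t :=
  ((Real.continuousAt_rpow_const t _ (Or.inl ht.ne')).mul
    ((Real.continuous_exp.comp continuous_neg).continuousAt))

lemma uG_integrableOn (s : ℝ) {c : ℝ} (hc : 0 < c) :
    IntegrableOn (fun t : ℝ => t ^ (s - 1) * Real.exp (-t)) (Set.Ioi c) := by
  set s' : ℝ := max s 1 with hs'def
  have hs' : (0:ℝ) < s' := lt_of_lt_of_le one_pos (le_max_right _ _)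
  have hint : IntegrableOn
      (fun t : ℝ => c ^ (s - s') * (Real.exp (-t) * t ^ (s' - 1))) (Set.Ioi c) :=
    ((Real.GammaIntegral_convergent hs').mono_set (Set.Ioi_subset_Ioi hc.le)).const_mul _
  refine hint.integrable.mono ?_ ?_
  · exact (continuousOn_of_forall_continuousAt fun t ht => uG_cont s (hc.trans ht)).aestronglyMeasurable
      measurableSet_Ioi
  · refine (ae_restrict_iff' measurableSet_Ioi).2 (Filter.Eventually.of_forall fun t ht => ?_)
    have ht0 : (0:ℝ) < t := hc.trans ht
    have h1 : t ^ (s - 1) = t ^ (s - s') * t ^ (s' - 1) := by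
      rw [← Real.rpow_add ht0]; ring_nf
    have h2 : t ^ (s - s') ≤ c ^ (s - s') :=
      Real.rpow_le_rpow_of_nonpos hc (le_of_lt ht)
        (sub_nonpos.mpr (le_max_left _ _))
    rw [show ∀ r : ℝ, ‖r‖ = |r| from fun r => rfl, show ∀ r : ℝ, ‖r‖ = |r| from fun r => rfl, _root_.abs_of_nonneg, _root_.abs_of_nonneg]
    · rw [h1]
      calc t ^ (s - s') * t ^ (s' - 1) * Real.exp (-t)
          ≤ c ^ (s - s') * t ^ (s' - 1) * Real.exp (-t) := by
            apply mul_le_mul_of_nonneg_right (mul_le_mul_of_nonneg_right h2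
              (Real.rpow_nonneg ht0.le _)) (Real.exp_nonneg _)
        _ = c ^ (s - s') * (Real.exp (-t) * t ^ (s' - 1)) := by ring
    · positivity
    · positivity

lemma uGamma_eq_sub (s : ℝ) {c x : ℝ} (hc : 0 < c) (hcx : c ≤ x) :
    uGamma s x = uGamma s c - ∫ t in c..x, t ^ (s - 1) * Real.exp (-t) := by
  rw [intervalIntegral.integral_of_le hcx]
  have hu : Set.Ioc c x ∪ Set.Ioi x = Set.Ioi c := Set.Ioc_union_Ioi_eq_Ioi hcx
  have hd : Disjoint (Set.Ioc c x) (Set.Ioi x) := Set.Ioc_disjoint_Ioi le_rfl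
  have h1 := uG_integrableOn s hc
  rw [uGamma, uGamma, ← hu] at *
  rw [setIntegral_union hd measurableSet_Ioi
    (h1.mono_set Set.subset_union_left) (h1.mono_set Set.subset_union_right)]
  ring

lemma hasDerivAt_uGamma (s : ℝ) {x : ℝ} (hx : 0 < x) :
    HasDerivAt (uGamma s) (-(x ^ (s - 1) * Real.exp (-x))) x := by
  set c : ℝ := x / 2 with hcdef
  have hc : 0 < c := by positivity
  have hcx : c < x := by simp [hcdef]; linarith
  have hii : IntervalIntegrable (fun t : ℝ => t ^ (s - 1) * Real.exp (-t)) volume c x := by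
    rw [intervalIntegrable_iff_integrableOn_Ioc_of_le hcx.le]
    exact (uG_integrableOn s hc).mono_set Set.Ioc_subset_Ioi_self
  have hd : HasDerivAt (fun u => ∫ t in c..u, t ^ (s - 1) * Real.exp (-t))
      (x ^ (s - 1) * Real.exp (-x)) x :=
    intervalIntegral.integral_hasDerivAt_right hii
      (ContinuousAt.stronglyMeasurableAtFilter isOpen_Ioi
        (fun u hu => uG_cont s hu) x hx) (uG_cont s hx)
  have hd2 := hd.const_sub (uGamma s c)
  refine hd2.congr_of_eventuallyEq ?_
  filter_upwards [Ioi_mem_nhds hcx] with u hu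
  exact uGamma_eq_sub s hc (le_of_lt hu)

lemma keyF (g : ℝ → ℝ) (g' a : ℝ) (z : ℂ) (hg : HasDerivAt g g' z.im) :
    ∃ L : ℂ →L[ℝ] ℂ,
      HasFDerivAt (fun w : ℂ => ((g w.im : ℝ) : ℂ) * Complex.exp (Complex.I * a * w)) L z ∧
      L 1 = Complex.I * a * (((g z.im : ℝ) : ℂ) * Complex.exp (Complex.I * a * z)) ∧
      L Complex.I = (g' : ℂ) * Complex.exp (Complex.I * a * z)
        - (a : ℂ) * (((g z.im : ℝ) : ℂ) * Complex.exp (Complex.I * a * z)) := by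
  have him : HasFDerivAt Complex.im Complex.imCLM z := Complex.imCLM.hasFDerivAt
  have hg2 : HasFDerivAt (fun w : ℂ => g w.im) (g' • Complex.imCLM) z :=
    hg.comp_hasFDerivAt z him
  have h1 : HasFDerivAt (fun w : ℂ => ((g w.im : ℝ) : ℂ))
      (Complex.ofRealCLM.comp (g' • Complex.imCLM)) z :=
    Complex.ofRealCLM.hasFDerivAt.comp z hg2
  have hE : HasDerivAt (fun w : ℂ => Complex.exp (Complex.I * a * w))
      (Complex.exp (Complex.I * a * z) * (Complex.I * a)) z := by
    have := ((hasDerivAt_id z).const_mul (Complex.I * a)).cexp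
    simpa using this
  have hE' := hE.hasFDerivAt.restrictScalars ℝ
  have hF := h1.mul hE'
  refine ⟨_, hF, ?_, ?_⟩ <;>
    · simp [ContinuousLinearMap.add_apply, ContinuousLinearMap.smul_apply,
        ContinuousLinearMap.comp_apply, ContinuousLinearMap.coe_restrictScalars',
        ContinuousLinearMap.smulRight_apply, ContinuousLinearMap.one_apply,
        Complex.imCLM_apply, Complex.ofRealCLM_apply, smul_eq_mul]
      ring_nf
      try simp [Complex.I_sq]
      try ring_nf

lemma hasDerivAt_g (k b : ℝ) (hb : b < 0) {y : ℝ} (hy : 0 < y) :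
    HasDerivAt (fun y : ℝ => uGamma (1 - k) (-2 * b * y))
      (2 * b * ((-2 * b * y) ^ (-k) * Real.exp (2 * b * y))) y := by
  have hu : 0 < -2 * b * y := by nlinarith
  have hinner : HasDerivAt (fun y : ℝ => -2 * b * y) (-2 * b) y := by
    simpa using (hasDerivAt_id y).const_mul (-2 * b)
  have := (hasDerivAt_uGamma (1 - k) hu).comp y hinner
  refine this.congr_deriv ?_
  rw [show (1 - k - 1 : ℝ) = -k by ring, show -(-2 * b * y) = 2 * b * y by ring]
  ring

lemma hasDerivAt_q (k b : ℝ) (hb : b < 0) {y : ℝ} (hy : 0 < y) :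
    HasDerivAt (fun y : ℝ => 2 * b * ((-2 * b * y) ^ (-k) * Real.exp (2 * b * y)))
      (2 * b * ((-2 * b * y) ^ (-k) * Real.exp (2 * b * y)) * (2 * b - k / y)) y := by
  have hu : 0 < -2 * b * y := by nlinarith
  have hinner : HasDerivAt (fun y : ℝ => -2 * b * y) (-2 * b) y := by
    simpa using (hasDerivAt_id y).const_mul (-2 * b)
  have hinner2 : HasDerivAt (fun y : ℝ => 2 * b * y) (2 * b) y := by
    simpa using (hasDerivAt_id y).const_mul (2 * b)
  have h1 : HasDerivAt (fun y : ℝ => (-2 * b * y) ^ (-k))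
      ((-k) * (-2 * b * y) ^ (-k - 1) * (-2 * b)) y :=
    (Real.hasDerivAt_rpow_const (Or.inl hu.ne')).comp y hinner
  have h2 : HasDerivAt (fun y : ℝ => Real.exp (2 * b * y)) (Real.exp (2 * b * y) * (2 * b)) y :=
    hinner2.exp
  have h3 := (h1.mul h2).const_mul (2 * b)
  refine h3.congr_deriv ?_
  have hr : (-2 * b * y) ^ (-k - 1) = (-2 * b * y) ^ (-k) / (-2 * b * y) :=
    Real.rpow_sub_one hu.ne' _
  rw [hr]
  field_simp [hy.ne', hb.ne]
  ring

end AuxHypLap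

open MeasureTheory Set in
/-- For `n` a negative integer and `k ∈ ℝ`, the function
`h(τ) = Γ(1-k, -4πny) e^{2πinτ}` is annihilated by the weight `k` hyperbolic
Laplacian on the upper half-plane. -/
theorem hypLap_incGamma_term (k : ℝ) (n : ℤ) (hn : n < 0) (τ : ℂ) (hτ : τ ∈ UHP) :
    hypLap k (fun z : ℂ =>
        ((uGamma (1 - k) (-4 * Real.pi * (n : ℝ) * z.im) : ℝ) : ℂ) *
          Complex.exp (2 * Real.pi * Complex.I * (n : ℂ) * z)) τ = 0 := by
  have hy : 0 < τ.im := hτ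
  set b : ℝ := 2 * Real.pi * n with hbdef
  have hb : b < 0 := by
    have : (n : ℝ) < 0 := by exact_mod_cast hn
    have := Real.pi_pos
    nlinarith
  set g : ℝ → ℝ := fun y => uGamma (1 - k) (-2 * b * y) with hgdef
  set q : ℝ → ℝ := fun y => 2 * b * ((-2 * b * y) ^ (-k) * Real.exp (2 * b * y)) with hqdef
  set F : ℂ → ℂ := fun w => ((g w.im : ℝ) : ℂ) * Complex.exp (Complex.I * b * w) with hFdef
  have hFeq : (fun z : ℂ =>
      ((uGamma (1 - k) (-4 * Real.pi * (n : ℝ) * z.im) : ℝ) : ℂ) *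
        Complex.exp (2 * Real.pi * Complex.I * (n : ℂ) * z)) = F := by
    funext w
    have h1 : -4 * Real.pi * (n : ℝ) * w.im = -2 * b * w.im := by rw [hbdef]; ring
    have h2 : 2 * Real.pi * Complex.I * (n : ℂ) * w = Complex.I * (b : ℂ) * w := by
      rw [hbdef]; push_cast; ring
    rw [hFdef, h1, h2]
  rw [hFeq]
  -- basic derivative facts
  have hgD : ∀ z : ℂ, 0 < z.im → HasDerivAt g (q z.im) z.im := fun z hz =>
    hasDerivAt_g k b hb hz
  have hqD : HasDerivAt q (q τ.im * (2 * b - k / τ.im)) τ.im := hasDerivAt_q k b hb hy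
  have hU : ∀ᶠ z : ℂ in nhds τ, 0 < z.im :=
    (isOpen_lt continuous_const Complex.continuous_im).mem_nhds hy
  have hpdx : ∀ z : ℂ, 0 < z.im → pdx F z = Complex.I * b * F z := by
    intro z hz
    obtain ⟨L, hL, h1, _⟩ := keyF g (q z.im) b z (hgD z hz)
    rw [hFdef, pdx, hL.fderiv]; exact h1
  have hpdy : ∀ z : ℂ, 0 < z.im →
      pdy F z = ((q z.im : ℝ) : ℂ) * Complex.exp (Complex.I * b * z)
        - (b : ℂ) * (((g z.im : ℝ) : ℂ) * Complex.exp (Complex.I * b * z)) := by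
    intro z hz
    obtain ⟨L, hL, _, h2⟩ := keyF g (q z.im) b z (hgD z hz)
    rw [hFdef, pdy, hL.fderiv]; exact h2
  -- second derivatives
  have hxx : pdx (pdx F) τ = Complex.I * b * (Complex.I * b * F τ) := by
    have hev : pdx F =ᶠ[nhds τ] fun z => Complex.I * b * F z := by
      filter_upwards [hU] with z hz using hpdx z hz
    obtain ⟨L, hL, h1, _⟩ := keyF g (q τ.im) b τ (hgD τ hy)
    have hL' : HasFDerivAt (fun z => Complex.I * (b : ℂ) * F z)
        ((Complex.I * (b : ℂ)) • L) τ := by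
      simpa [hFdef, mul_assoc] using hL.const_mul (Complex.I * (b : ℂ))
    rw [pdx, hev.fderiv_eq, hL'.fderiv]
    simp only [ContinuousLinearMap.smul_apply, smul_eq_mul]
    rw [h1, hFdef]
  have hyy : pdy (pdy F) τ =
      (((q τ.im * (2 * b - k / τ.im) : ℝ)) : ℂ) * Complex.exp (Complex.I * b * τ)
        - (b : ℂ) * (((q τ.im : ℝ) : ℂ) * Complex.exp (Complex.I * b * τ))
        - (b : ℂ) * (((q τ.im : ℝ) : ℂ) * Complex.exp (Complex.I * b * τ)
            - (b : ℂ) * (((g τ.im : ℝ) : ℂ) * Complex.exp (Complex.I * b * τ))) := by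
    have hev : pdy F =ᶠ[nhds τ] fun z =>
        ((q z.im : ℝ) : ℂ) * Complex.exp (Complex.I * b * z)
          - (b : ℂ) * (((g z.im : ℝ) : ℂ) * Complex.exp (Complex.I * b * z)) := by
      filter_upwards [hU] with z hz using hpdy z hz
    obtain ⟨Lq, hLq, _, hq2⟩ := keyF q (q τ.im * (2 * b - k / τ.im)) b τ hqD
    obtain ⟨Lg, hLg, _, hg2⟩ := keyF g (q τ.im) b τ (hgD τ hy)
    have hsub : HasFDerivAt (fun z =>
        ((q z.im : ℝ) : ℂ) * Complex.exp (Complex.I * b * z)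
          - (b : ℂ) * (((g z.im : ℝ) : ℂ) * Complex.exp (Complex.I * b * z)))
        (Lq - (b : ℂ) • Lg) τ := hLq.sub (hLg.const_mul (b : ℂ))
    rw [pdy, hev.fderiv_eq, hsub.fderiv]
    simp only [ContinuousLinearMap.sub_apply, ContinuousLinearMap.smul_apply, smul_eq_mul]
    rw [hq2, hg2]
  -- assemble
  have hyne : ((τ.im : ℝ) : ℂ) ≠ 0 := by exact_mod_cast hy.ne'
  rw [hypLap, hxx, hyy, hpdx τ hy, hpdy τ hy, hFdef]
  push_cast
  field_simp
  try ring_nf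
  try simp [Complex.I_sq]
  try ring_nf
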